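/- For N ≥ 2 and vectors z_i, z_i' ∈ ℝ^d (i ∈ Fin N), define the InfoNCE loss L := −Σ_i log( exp(−‖z_i−z_i'‖²/2) / Z_i ), where Z_i := Σ_{j≠i} exp(−‖z_i−z_j‖²/2) + exp(−‖z_i−z_i'‖²/2), and set α_{ij} := exp(−‖z_i−z_j‖²/2)/Z_i for j ≠ i and α_{ii} := exp(−‖z_i−z_i'‖²/2)/Z_i. Then L, viewed as a differentiable function of the 2N vectors (z_1,…,z_N, z_1',…,z_N'), has partial gradients ∂L/∂z_i = Σ_{j≠i} α_{ij}(z_j − z_i') + Σ_{j≠i} α_{ji}(z_j − z_i) and ∂L/∂z_i' = Σ_{j≠i} α_{ij}(z_i' − z_i) for every i. -/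

import Mathlib

open Finset Function

section helpers
variable {E : Type*} [NormedAddCommGroup E] [InnerProductSpace ℝ E] [CompleteSpace E]
  {f g : E → ℝ} {f' g' x : E}

lemma myGrad.add (hf : HasGradientAt f f' x)
    (hg : HasGradientAt g g' x) : HasGradientAt (fun v => f v + g v) (f' + g') x := by
  rw [hasGradientAt_iff_hasFDerivAt] at *
  rw [map_add]; exact hf.add hg

lemma myGrad.const_add (c : ℝ) (hf : HasGradientAt f f' x) :
    HasGradientAt (fun v => c + f v) f' x := by
  rw [hasGradientAt_iff_hasFDerivAt] at *
  simpa using hf.const_add c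

lemma myGrad.add_const (c : ℝ) (hf : HasGradientAt f f' x) :
    HasGradientAt (fun v => f v + c) f' x := by
  rw [hasGradientAt_iff_hasFDerivAt] at *
  simpa using hf.add_const c

lemma myGrad.neg (hf : HasGradientAt f f' x) :
    HasGradientAt (fun v => -(f v)) (-f') x := by
  rw [hasGradientAt_iff_hasFDerivAt] at *
  rw [map_neg]; exact hf.neg

lemma myGrad.sum {ι : Type*} {s : Finset ι} {f : ι → E → ℝ} {f' : ι → E} {x : E}
    (hf : ∀ i ∈ s, HasGradientAt (f i) (f' i) x) :
    HasGradientAt (fun v => ∑ i ∈ s, f i v) (∑ i ∈ s, f' i) x := by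
  simp only [hasGradientAt_iff_hasFDerivAt] at *
  rw [map_sum]; exact HasFDerivAt.fun_sum hf

lemma myGrad.comp {g : ℝ → ℝ} {g' : ℝ}
    (hg : HasDerivAt g g' (f x)) (hf : HasGradientAt f f' x) :
    HasGradientAt (fun v => g (f v)) (g' • f') x := by
  rw [hasGradientAt_iff_hasFDerivAt] at *
  rw [map_smul]; exact hg.comp_hasFDerivAt x hf

lemma myGrad.sq (c x : E) : HasGradientAt (fun v : E => ‖v - c‖ ^ 2 / 2) (x - c) x := by
  rw [hasGradientAt_iff_hasFDerivAt]
  have h : HasFDerivAt (fun v : E => (inner ℝ (v - c) (v - c) : ℝ) / 2)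
      ((InnerProductSpace.toDual ℝ E) (x - c)) x := by
    have h1 := ((hasFDerivAt_id x).sub_const c).inner ℝ ((hasFDerivAt_id x).sub_const c)
    have h2 := h1.const_smul (2⁻¹ : ℝ)
    convert h2 using 1
    · rfl
    · rfl
    · ext v; simp [smul_eq_mul]; ring
    · ext u
      simp only [InnerProductSpace.toDual_apply_apply, ContinuousLinearMap.coe_comp', comp_apply,
        ContinuousLinearMap.smul_apply, ContinuousLinearMap.prod_apply,
        ContinuousLinearMap.coe_id', id_eq, fderivInnerCLM_apply, smul_eq_mul]
      rw [real_inner_comm u (x - c)]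
      ring
  convert h using 2 with v
  · rfl
  rw [← real_inner_self_eq_norm_sq]

lemma myGrad.negsq (c x : E) :
    HasGradientAt (fun v : E => -‖v - c‖ ^ 2 / 2) (c - x) x := by
  have he : (fun v : E => -‖v - c‖ ^ 2 / 2) = fun v : E => -(‖v - c‖ ^ 2 / 2) := by
    funext v; ring
  rw [he, ← neg_sub x c]
  exact myGrad.neg (myGrad.sq c x)

lemma myGrad.expsq (c x : E) :
    HasGradientAt (fun v : E => Real.exp (-‖v - c‖ ^ 2 / 2))
      (Real.exp (-‖x - c‖ ^ 2 / 2) • (c - x)) x :=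
  myGrad.comp (Real.hasDerivAt_exp _) (myGrad.negsq c x)

end helpers

set_option maxHeartbeats 2000000 in
theorem infoNCE_embedding_gradients (N d : ℕ) (hN : 2 ≤ N)
    (z z' : Fin N → EuclideanSpace ℝ (Fin d))
    (L : (Fin N → EuclideanSpace ℝ (Fin d)) →
         (Fin N → EuclideanSpace ℝ (Fin d)) → ℝ)
    (hL : L = fun w w' => -∑ i, Real.log
      (Real.exp (-‖w i - w' i‖ ^ 2 / 2) /
        ((∑ j ∈ univ.erase i, Real.exp (-‖w i - w j‖ ^ 2 / 2)) +
          Real.exp (-‖w i - w' i‖ ^ 2 / 2))))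
    (Z : Fin N → ℝ)
    (hZ : ∀ i, Z i = (∑ j ∈ univ.erase i, Real.exp (-‖z i - z j‖ ^ 2 / 2)) +
          Real.exp (-‖z i - z' i‖ ^ 2 / 2))
    (α : Fin N → Fin N → ℝ)
    (hα : ∀ i j, α i j =
      if j = i then Real.exp (-‖z i - z' i‖ ^ 2 / 2) / Z i
      else Real.exp (-‖z i - z j‖ ^ 2 / 2) / Z i) :
    ∀ i,
      HasGradientAt (fun v => L (update z i v) z')
        ((∑ j ∈ univ.erase i, α i j • (z j - z' i)) +
         (∑ j ∈ univ.erase i, α j i • (z j - z i))) (z i) ∧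
      HasGradientAt (fun v => L z (update z' i v))
        (∑ j ∈ univ.erase i, α i j • (z' i - z i)) (z' i) := by
  have hZpos : ∀ k, 0 < Z k := by
    intro k; rw [hZ]
    have h1 : (0:ℝ) ≤ ∑ j ∈ univ.erase k, Real.exp (-‖z k - z j‖ ^ 2 / 2) :=
      Finset.sum_nonneg fun j _ => (Real.exp_pos _).le
    have h2 := Real.exp_pos (-‖z k - z' k‖ ^ 2 / 2)
    linarith
  intro i
  -- sum of the α i j over j ≠ i
  have hsum' : ∑ j ∈ univ.erase i, α i j = 1 - α i i := by
    have h1 : ∑ j ∈ univ.erase i, α i j =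
        (∑ j ∈ univ.erase i, Real.exp (-‖z i - z j‖ ^ 2 / 2)) / Z i := by
      rw [Finset.sum_div]
      exact Finset.sum_congr rfl fun j hj => by rw [hα, if_neg (Finset.mem_erase.1 hj).1]
    rw [h1, hα, if_pos rfl, eq_sub_iff_add_eq, ← add_div, ← hZ i,
      div_self (hZpos i).ne']
  constructor
  · -- gradient with respect to z i
    have key1 : (fun v => L (update z i v) z') = fun v =>
        (‖v - z' i‖ ^ 2 / 2 +
          Real.log ((∑ j ∈ univ.erase i, Real.exp (-‖v - z j‖ ^ 2 / 2)) +
            Real.exp (-‖v - z' i‖ ^ 2 / 2))) +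
        ∑ k ∈ univ.erase i, (‖z k - z' k‖ ^ 2 / 2 +
          Real.log ((Real.exp (-‖v - z k‖ ^ 2 / 2) +
            ∑ j ∈ (univ.erase k).erase i, Real.exp (-‖z k - z j‖ ^ 2 / 2)) +
            Real.exp (-‖z k - z' k‖ ^ 2 / 2))) := by
      funext v
      rw [hL]
      simp only
      rw [← Finset.add_sum_erase _ _ (mem_univ i), neg_add]
      congr 1
      · have hsc : ∑ j ∈ univ.erase i, Real.exp (-‖v - update z i v j‖ ^ 2 / 2)
            = ∑ j ∈ univ.erase i, Real.exp (-‖v - z j‖ ^ 2 / 2) :=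
          Finset.sum_congr rfl fun j hj => by
            rw [Function.update_of_ne (Finset.mem_erase.1 hj).1]
        rw [Function.update_self, hsc, Real.log_div (Real.exp_ne_zero _) (by positivity),
          Real.log_exp]
        ring
      · rw [← Finset.sum_neg_distrib]
        refine Finset.sum_congr rfl fun k hk => ?_
        have hki : k ≠ i := (Finset.mem_erase.1 hk).1
        have hik : i ∈ univ.erase k := Finset.mem_erase.2 ⟨hki.symm, mem_univ i⟩
        rw [Function.update_of_ne hki]
        have hsc : ∑ j ∈ univ.erase k, Real.exp (-‖z k - update z i v j‖ ^ 2 / 2)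
            = Real.exp (-‖v - z k‖ ^ 2 / 2) +
              ∑ j ∈ (univ.erase k).erase i, Real.exp (-‖z k - z j‖ ^ 2 / 2) := by
          rw [← Finset.add_sum_erase _ _ hik, Function.update_self, norm_sub_rev (z k) v]
          congr 1
          exact Finset.sum_congr rfl fun j hj => by
            rw [Function.update_of_ne (Finset.mem_erase.1 hj).1]
        rw [hsc, Real.log_div (Real.exp_ne_zero _) (by positivity), Real.log_exp]
        ring
    rw [key1]
    have h1 : HasGradientAt (fun v : EuclideanSpace ℝ (Fin d) => ‖v - z' i‖ ^ 2 / 2)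
        (z i - z' i) (z i) := myGrad.sq _ _
    have hSsum : HasGradientAt
        (fun v : EuclideanSpace ℝ (Fin d) =>
          ∑ j ∈ univ.erase i, Real.exp (-‖v - z j‖ ^ 2 / 2))
        (∑ j ∈ univ.erase i, Real.exp (-‖z i - z j‖ ^ 2 / 2) • (z j - z i)) (z i) :=
      myGrad.sum fun j _ => myGrad.expsq (z j) (z i)
    have hS := myGrad.add hSsum (myGrad.expsq (z' i) (z i))
    have hneS : (∑ j ∈ univ.erase i, Real.exp (-‖z i - z j‖ ^ 2 / 2)) +
        Real.exp (-‖z i - z' i‖ ^ 2 / 2) ≠ 0 := by positivity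
    have hlog : HasGradientAt (fun v : EuclideanSpace ℝ (Fin d) =>
        Real.log ((∑ j ∈ univ.erase i, Real.exp (-‖v - z j‖ ^ 2 / 2)) +
          Real.exp (-‖v - z' i‖ ^ 2 / 2)))
        (((∑ j ∈ univ.erase i, Real.exp (-‖z i - z j‖ ^ 2 / 2)) +
          Real.exp (-‖z i - z' i‖ ^ 2 / 2))⁻¹ •
          ((∑ j ∈ univ.erase i, Real.exp (-‖z i - z j‖ ^ 2 / 2) • (z j - z i)) +
            Real.exp (-‖z i - z' i‖ ^ 2 / 2) • (z' i - z i))) (z i) :=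
      myGrad.comp (Real.hasDerivAt_log hneS) hS
    have hA := myGrad.add h1 hlog
    have hBk : ∀ k ∈ univ.erase i, HasGradientAt
        (fun v : EuclideanSpace ℝ (Fin d) => ‖z k - z' k‖ ^ 2 / 2 +
          Real.log ((Real.exp (-‖v - z k‖ ^ 2 / 2) +
            ∑ j ∈ (univ.erase k).erase i, Real.exp (-‖z k - z j‖ ^ 2 / 2)) +
            Real.exp (-‖z k - z' k‖ ^ 2 / 2)))
        (((Real.exp (-‖z i - z k‖ ^ 2 / 2) +
            ∑ j ∈ (univ.erase k).erase i, Real.exp (-‖z k - z j‖ ^ 2 / 2)) +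
            Real.exp (-‖z k - z' k‖ ^ 2 / 2))⁻¹ •
          (Real.exp (-‖z i - z k‖ ^ 2 / 2) • (z k - z i))) (z i) := by
      intro k hk
      have hne : (Real.exp (-‖z i - z k‖ ^ 2 / 2) +
          ∑ j ∈ (univ.erase k).erase i, Real.exp (-‖z k - z j‖ ^ 2 / 2)) +
          Real.exp (-‖z k - z' k‖ ^ 2 / 2) ≠ 0 := by positivity
      exact myGrad.const_add _ (myGrad.comp (Real.hasDerivAt_log hne)
        (myGrad.add_const _ (myGrad.add_const _ (myGrad.expsq (z k) (z i)))))
    have hB := myGrad.sum hBk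
    have htot := myGrad.add hA hB
    convert htot using 1
    congr 1
    · -- first component
      rw [← hZ i, smul_add, Finset.smul_sum]
      have hterm : ∀ j ∈ univ.erase i,
          (Z i)⁻¹ • (Real.exp (-‖z i - z j‖ ^ 2 / 2) • (z j - z i)) = α i j • (z j - z i) :=
        fun j hj => by
          rw [hα i j, if_neg (Finset.mem_erase.1 hj).1, smul_smul]
          congr 1
          ring
      rw [Finset.sum_congr rfl hterm]
      have h2 : (Z i)⁻¹ • (Real.exp (-‖z i - z' i‖ ^ 2 / 2) • (z' i - z i))
          = α i i • (z' i - z i) := by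
        rw [hα i i, if_pos rfl, smul_smul]
        congr 1
        ring
      rw [h2]
      have hsplit : ∀ j ∈ univ.erase i,
          α i j • (z j - z' i) = α i j • (z j - z i) + α i j • (z i - z' i) :=
        fun j _ => by rw [← smul_add]; congr 1; abel
      rw [Finset.sum_congr rfl hsplit, Finset.sum_add_distrib, ← Finset.sum_smul, hsum']
      module
    · -- second component
      refine Finset.sum_congr rfl fun k hk => ?_
      have hki : k ≠ i := (Finset.mem_erase.1 hk).1
      have hik : i ∈ univ.erase k := Finset.mem_erase.2 ⟨hki.symm, mem_univ i⟩
      have hadd : Real.exp (-‖z k - z i‖ ^ 2 / 2) +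
          ∑ j ∈ (univ.erase k).erase i, Real.exp (-‖z k - z j‖ ^ 2 / 2) =
          ∑ j ∈ univ.erase k, Real.exp (-‖z k - z j‖ ^ 2 / 2) :=
        Finset.add_sum_erase _ (fun j => Real.exp (-‖z k - z j‖ ^ 2 / 2)) hik
      rw [hα k i, if_neg hki.symm, norm_sub_rev (z i) (z k), hadd, ← hZ k, smul_smul]
      congr 1
      ring
  · -- gradient with respect to z' i
    have key2 : (fun v => L z (update z' i v)) = fun v =>
        (‖v - z i‖ ^ 2 / 2 +
          Real.log ((∑ j ∈ univ.erase i, Real.exp (-‖z i - z j‖ ^ 2 / 2)) +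
            Real.exp (-‖v - z i‖ ^ 2 / 2))) +
        ∑ k ∈ univ.erase i, (‖z k - z' k‖ ^ 2 / 2 +
          Real.log ((∑ j ∈ univ.erase k, Real.exp (-‖z k - z j‖ ^ 2 / 2)) +
            Real.exp (-‖z k - z' k‖ ^ 2 / 2))) := by
      funext v
      rw [hL]
      simp only
      rw [← Finset.add_sum_erase _ _ (mem_univ i), neg_add]
      congr 1
      · rw [Function.update_self, Real.log_div (Real.exp_ne_zero _) (by positivity),
          Real.log_exp, norm_sub_rev (z i) v]
        ring
      · rw [← Finset.sum_neg_distrib]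
        refine Finset.sum_congr rfl fun k hk => ?_
        rw [Function.update_of_ne (Finset.mem_erase.1 hk).1,
          Real.log_div (Real.exp_ne_zero _) (by positivity), Real.log_exp]
        ring
    rw [key2]
    have h1 : HasGradientAt (fun v : EuclideanSpace ℝ (Fin d) => ‖v - z i‖ ^ 2 / 2)
        (z' i - z i) (z' i) := myGrad.sq _ _
    have h2 := myGrad.const_add (∑ j ∈ univ.erase i, Real.exp (-‖z i - z j‖ ^ 2 / 2))
      (myGrad.expsq (z i) (z' i))
    have hne : (∑ j ∈ univ.erase i, Real.exp (-‖z i - z j‖ ^ 2 / 2)) +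
        Real.exp (-‖z' i - z i‖ ^ 2 / 2) ≠ 0 := by positivity
    have h3 : HasGradientAt (fun v : EuclideanSpace ℝ (Fin d) =>
        Real.log ((∑ j ∈ univ.erase i, Real.exp (-‖z i - z j‖ ^ 2 / 2)) +
          Real.exp (-‖v - z i‖ ^ 2 / 2)))
        (((∑ j ∈ univ.erase i, Real.exp (-‖z i - z j‖ ^ 2 / 2)) +
          Real.exp (-‖z' i - z i‖ ^ 2 / 2))⁻¹ •
          (Real.exp (-‖z' i - z i‖ ^ 2 / 2) • (z i - z' i))) (z' i) :=
      myGrad.comp (Real.hasDerivAt_log hne) h2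
    have h4 := myGrad.add h1 h3
    have h5 := myGrad.add_const (∑ k ∈ univ.erase i, (‖z k - z' k‖ ^ 2 / 2 +
        Real.log ((∑ j ∈ univ.erase k, Real.exp (-‖z k - z j‖ ^ 2 / 2)) +
          Real.exp (-‖z k - z' k‖ ^ 2 / 2)))) h4
    convert h5 using 1
    rw [← Finset.sum_smul, hsum', hα, if_pos rfl, norm_sub_rev (z' i) (z i), ← hZ i]
    module
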